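/- Fix r ≥ 3. Let φ be an instance of Exact r-SAT and G(φ) the graph of the weak-r-coloring reduction (2r clause vertices per clause, adjacent literal pairs v_j, v'_j, and two (r−2)-subdivided edges between each literal vertex and each clause vertex of clauses containing that literal). If wcol_r(G(φ)) ≤ 2r−1, then φ has a satisfying assignment. -/

import Mathlib

open SimpleGraph

variable {V : Type*}

/-- The strict order relation of a linear order. -/
def olt (σ : LinearOrder V) (a b : V) : Prop := σ.lt a b

/-- The set of vertices `r`-reachable from `u` with respect to `σ`:
vertices `v >_σ u` joined to `u` by a path of length at most `r`
whose internal vertices all precede `u` in `σ`. -/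
def reachSet (G : SimpleGraph V) (σ : LinearOrder V) (r : ℕ) (u : V) : Set V :=
  {v | olt σ u v ∧ ∃ p : G.Walk u v, p.IsPath ∧ p.length ≤ r ∧
    ∀ w ∈ p.support, w ≠ u → w ≠ v → olt σ w u}

/-- The set of vertices weakly `r`-reachable from `u` with respect to `σ`:
vertices `v >_σ u` joined to `u` by a path of length at most `r`
whose internal vertices all precede `v` in `σ`. -/
def wreachSet (G : SimpleGraph V) (σ : LinearOrder V) (r : ℕ) (u : V) : Set V :=
  {v | olt σ u v ∧ ∃ p : G.Walk u v, p.IsPath ∧ p.length ≤ r ∧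
    ∀ w ∈ p.support, w ≠ u → w ≠ v → olt σ w v}

/-- `col_r(G_σ)`: the maximum `r`-reach over all vertices. -/
noncomputable def colOrd [Fintype V] (G : SimpleGraph V) (σ : LinearOrder V) (r : ℕ) : ℕ :=
  Finset.univ.sup fun u => (reachSet G σ r u).ncard

/-- `wcol_r(G_σ)`: the maximum weak `r`-reach over all vertices. -/
noncomputable def wcolOrd [Fintype V] (G : SimpleGraph V) (σ : LinearOrder V) (r : ℕ) : ℕ :=
  Finset.univ.sup fun u => (wreachSet G σ r u).ncard

/-- The `r`-coloring number of `G`. -/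
noncomputable def colNum [Fintype V] (G : SimpleGraph V) (r : ℕ) : ℕ :=
  ⨅ σ : LinearOrder V, colOrd G σ r

/-- The weak `r`-coloring number of `G`. -/
noncomputable def wcolNum [Fintype V] (G : SimpleGraph V) (r : ℕ) : ℕ :=
  ⨅ σ : LinearOrder V, wcolOrd G σ r

/-- `p` is an `r`-qualifying path from `u` with respect to the (possibly partial)
order `lt`: a path of length at most `r` ending at a vertex `v` with `v ≠ u`,
`v` not `<` `u`, all of whose internal vertices are `< u`. -/
def IsQual (G : SimpleGraph V) (lt : V → V → Prop) (r : ℕ) {u v : V} (p : G.Walk u v) : Prop :=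
  p.IsPath ∧ p.length ≤ r ∧ v ≠ u ∧ ¬ lt v u ∧ ∀ w ∈ p.support, w ≠ u → w ≠ v → lt w u

/-- The `r`-backconnectivity of `u`: the maximum number of `r`-qualifying paths from `u`
that are pairwise vertex-disjoint apart from `u`. -/
noncomputable def bcon (G : SimpleGraph V) (lt : V → V → Prop) (r : ℕ) (u : V) : ℕ :=
  sSup {n | ∃ f : Fin n → (v : V) × G.Walk u v,
    (∀ i, IsQual G lt r (f i).2) ∧
    ∀ i j : Fin n, i ≠ j → ∀ w, w ∈ (f i).2.support → w ∈ (f j).2.support → w = u}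

/-- A shortest `r`-qualifying path: an `r`-qualifying `u`–`v` path of length `ℓ` such that
there is no `(ℓ-1)`-qualifying `u`–`v` path. -/
def IsShortQual (G : SimpleGraph V) (lt : V → V → Prop) (r : ℕ) {u v : V} (p : G.Walk u v) :
    Prop :=
  IsQual G lt r p ∧ ¬ ∃ q : G.Walk u v, IsQual G lt (p.length - 1) q

/-- The estimated `r`-backconnectivity of `u`: the maximum number of shortest
`r`-qualifying paths from `u` that are pairwise vertex-disjoint apart from `u`. -/
noncomputable def est (G : SimpleGraph V) (lt : V → V → Prop) (r : ℕ) (u : V) : ℕ :=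
  sSup {n | ∃ f : Fin n → (v : V) × G.Walk u v,
    (∀ i, IsShortQual G lt r (f i).2) ∧
    ∀ i j : Fin n, i ≠ j → ∀ w, w ∈ (f i).2.support → w ∈ (f j).2.support → w = u}

/-- The `r`-admissibility of `G`. -/
noncomputable def admNum [Fintype V] (G : SimpleGraph V) (r : ℕ) : ℕ :=
  ⨅ σ : LinearOrder V, Finset.univ.sup fun u => bcon G (olt σ) r u

/-- `d_v(u, G_σ)`: the least `i` such that `v` is `i`-reachable from `u`. -/
noncomputable def dval (G : SimpleGraph V) (σ : LinearOrder V) (u v : V) : ℕ :=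
  sInf {i | v ∈ reachSet G σ i u}

/-- An instance of Exact r-SAT: a CNF formula where every clause contains exactly `r`
distinct variables (and no clause repeats a variable). -/
structure ExactSAT (r : ℕ) where
  n : ℕ
  m : ℕ
  clauses : Fin m → Finset (Fin n × Bool)
  vars_distinct : ∀ i, ∀ l ∈ clauses i, ∀ l' ∈ clauses i, l.1 = l'.1 → l = l'
  clause_card : ∀ i, (clauses i).card = r

/-- The assignment `A` satisfies the formula `φ`. -/
def ExactSAT.Sat {r : ℕ} (φ : ExactSAT r) (A : Fin φ.n → Bool) : Prop :=
  ∀ i, ∃ l ∈ φ.clauses i, A l.1 = l.2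

/-- The formula `φ` is satisfiable. -/
def ExactSAT.Satisfiable {r : ℕ} (φ : ExactSAT r) : Prop := ∃ A, φ.Sat A

/-- Vertices of the weak-`r`-coloring-number reduction graph `G(φ)`:
`2r` clause vertices `u i ℓ` per clause, a pair of literal vertices per variable
(`v j true` is `v_j`, `v j false` is `v'_j`), and subdivision vertices
`s occ ℓ c t`: for each occurrence `occ` of a literal in a clause, each of the `2r`
clause vertices `ℓ`, each of the two copies `c : Fin 2` of the subdivided edge,
the `t`-th of its `r - 2` internal vertices. -/
inductive VtxWR (r : ℕ) (φ : ExactSAT r) where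
  | u (i : Fin φ.m) (ℓ : Fin (2 * r))
  | v (j : Fin φ.n) (b : Bool)
  | s (occ : Σ i : Fin φ.m, {l : Fin φ.n × Bool // l ∈ φ.clauses i})
      (ℓ : Fin (2 * r)) (c : Fin 2) (t : Fin (r - 2))
  deriving DecidableEq, Fintype

/-- Base relation of the reduction graph: `v_j v'_j` edges, and for each literal
occurrence two `(r-2)`-subdivided edges between the literal vertex and each clause
vertex, realized as paths `v — s 0 — ⋯ — s (r-3) — u`. -/
def relWR (r : ℕ) (φ : ExactSAT r) : VtxWR r φ → VtxWR r φ → Prop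
  | .v j _, .v j' _ => j = j'
  | .v j b, .s occ _ _ t => occ.2.1 = (j, b) ∧ (t : ℕ) = 0
  | .s occ ℓ c t, .s occ' ℓ' c' t' => occ = occ' ∧ ℓ = ℓ' ∧ c = c' ∧ (t' : ℕ) = (t : ℕ) + 1
  | .s occ ℓ _ t, .u i ℓ' => occ.1 = i ∧ ℓ = ℓ' ∧ (t : ℕ) + 1 = r - 2
  | _, _ => False

/-- The reduction graph `G(φ)` for the weak `r`-coloring number. -/
def GWR (r : ℕ) (φ : ExactSAT r) : SimpleGraph (VtxWR r φ) := SimpleGraph.fromRel (relWR r φ)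


namespace WCRAux

open SimpleGraph Walk

variable {r : ℕ} {φ : ExactSAT r}

lemma adj_vv (j : Fin φ.n) (b : Bool) :
    (GWR r φ).Adj (.v j b) (.v j (!b)) := by
  refine ⟨by simp, Or.inl ?_⟩
  show relWR r φ (.v j b) (.v j (!b))
  simp [relWR]

lemma adj_vs (occ : Σ i : Fin φ.m, {l : Fin φ.n × Bool // l ∈ φ.clauses i})
    (ℓ : Fin (2 * r)) (c : Fin 2) (t : Fin (r - 2)) (j : Fin φ.n) (b : Bool)
    (h1 : occ.2.1 = (j, b)) (h2 : (t : ℕ) = 0) :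
    (GWR r φ).Adj (.v j b) (.s occ ℓ c t) := by
  refine ⟨by simp, Or.inl ?_⟩
  show relWR r φ (.v j b) (.s occ ℓ c t)
  simp [relWR, h1, h2]

lemma adj_ss (occ : Σ i : Fin φ.m, {l : Fin φ.n × Bool // l ∈ φ.clauses i})
    (ℓ : Fin (2 * r)) (c : Fin 2) (t t' : Fin (r - 2))
    (h : (t' : ℕ) = (t : ℕ) + 1) :
    (GWR r φ).Adj (.s occ ℓ c t) (.s occ ℓ c t') := by
  refine ⟨?_, Or.inl ?_⟩
  · simp only [ne_eq, VtxWR.s.injEq]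
    rintro ⟨-, -, -, rfl⟩; omega
  · show relWR r φ _ _
    simp [relWR, h]

lemma adj_su (occ : Σ i : Fin φ.m, {l : Fin φ.n × Bool // l ∈ φ.clauses i})
    (ℓ : Fin (2 * r)) (c : Fin 2) (t : Fin (r - 2)) (i : Fin φ.m)
    (h1 : occ.1 = i) (h2 : (t : ℕ) + 1 = r - 2) :
    (GWR r φ).Adj (.s occ ℓ c t) (.u i ℓ) := by
  refine ⟨by simp, Or.inl ?_⟩
  show relWR r φ _ _
  simp [relWR, h1, h2]

/-- Walk from subdivision vertex `t` (with `t + a + 3 = r`) up to the clause vertex. -/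
def upWalk (occ : Σ i : Fin φ.m, {l : Fin φ.n × Bool // l ∈ φ.clauses i})
    (ℓ : Fin (2 * r)) (c : Fin 2) :
    (a : ℕ) → (t : Fin (r - 2)) → (ht : (t : ℕ) + a + 3 = r) →
      (GWR r φ).Walk (.s occ ℓ c t) (.u occ.1 ℓ)
  | 0, t, ht => Walk.cons (adj_su occ ℓ c t occ.1 rfl (by omega)) Walk.nil
  | a + 1, t, ht =>
      Walk.cons (adj_ss occ ℓ c t ⟨(t : ℕ) + 1, by omega⟩ rfl)
        (upWalk occ ℓ c a ⟨(t : ℕ) + 1, by omega⟩ (by simp only [Fin.val_mk]; omega))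

lemma upWalk_length (occ : Σ i : Fin φ.m, {l : Fin φ.n × Bool // l ∈ φ.clauses i})
    (ℓ : Fin (2 * r)) (c : Fin 2) (a : ℕ) :
    ∀ (t : Fin (r - 2)) (ht : (t : ℕ) + a + 3 = r),
      (upWalk occ ℓ c a t ht).length = a + 1 := by
  induction a with
  | zero => intro t ht; rfl
  | succ a ih =>
      intro t ht
      show (Walk.cons _ _).length = a + 1 + 1
      rw [Walk.length_cons]
      rw [ih ⟨(t : ℕ) + 1, by omega⟩ (by simp only [Fin.val_mk]; omega)]

lemma upWalk_support (occ : Σ i : Fin φ.m, {l : Fin φ.n × Bool // l ∈ φ.clauses i})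
    (ℓ : Fin (2 * r)) (c : Fin 2) (a : ℕ) :
    ∀ (t : Fin (r - 2)) (ht : (t : ℕ) + a + 3 = r),
      ∀ x ∈ (upWalk occ ℓ c a t ht).support,
        x = VtxWR.u occ.1 ℓ ∨ ∃ t' : Fin (r - 2), (t : ℕ) ≤ (t' : ℕ) ∧ x = VtxWR.s occ ℓ c t' := by
  induction a with
  | zero =>
      intro t ht x hx
      simp only [upWalk, Walk.support_cons, Walk.support_nil, List.mem_cons,
        List.not_mem_nil] at hx
      rcases hx with rfl | rfl | h
      · exact Or.inr ⟨t, le_rfl, rfl⟩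
      · exact Or.inl rfl
      · cases h
  | succ a ih =>
      intro t ht x hx
      have hx' : x = VtxWR.s occ ℓ c t ∨
          x ∈ (upWalk occ ℓ c a ⟨(t : ℕ) + 1, by omega⟩
            (by simp only [Fin.val_mk]; omega)).support := by
        simpa only [upWalk, Walk.support_cons, List.mem_cons] using hx
      rcases hx' with rfl | hx'
      · exact Or.inr ⟨t, le_rfl, rfl⟩
      · rcases ih ⟨(t : ℕ) + 1, by omega⟩ (by simp only [Fin.val_mk]; omega) x hx' with
          h | ⟨t', ht', rfl⟩
        · exact Or.inl h
        · exact Or.inr ⟨t', by simp only [Fin.val_mk] at ht'; omega, rfl⟩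

lemma upWalk_isPath (occ : Σ i : Fin φ.m, {l : Fin φ.n × Bool // l ∈ φ.clauses i})
    (ℓ : Fin (2 * r)) (c : Fin 2) (a : ℕ) :
    ∀ (t : Fin (r - 2)) (ht : (t : ℕ) + a + 3 = r),
      (upWalk occ ℓ c a t ht).IsPath := by
  induction a with
  | zero =>
      intro t ht
      apply Walk.IsPath.cons Walk.IsPath.nil
      simp
  | succ a ih =>
      intro t ht
      apply Walk.IsPath.cons (ih ⟨(t : ℕ) + 1, by omega⟩ (by simp only [Fin.val_mk]; omega))
      intro hmem
      rcases upWalk_support occ ℓ c a ⟨(t : ℕ) + 1, by omega⟩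
          (by simp only [Fin.val_mk]; omega) _ hmem with h | ⟨t', ht', h⟩
      · cases h
      · simp only [VtxWR.s.injEq] at h
        obtain ⟨-, -, -, h4⟩ := h
        rw [← h4] at ht'
        simp only [Fin.val_mk] at ht'
        omega

/-- Walk from literal vertex to clause vertex, of length `r - 1`. -/
def litWalk (hr : 3 ≤ r) {i : Fin φ.m} {l : Fin φ.n × Bool} (hl : l ∈ φ.clauses i)
    (ℓ : Fin (2 * r)) (c : Fin 2) :
    (GWR r φ).Walk (.v l.1 l.2) (.u i ℓ) :=
  Walk.cons (adj_vs ⟨i, ⟨l, hl⟩⟩ ℓ c ⟨0, by omega⟩ l.1 l.2 rfl rfl)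
    (upWalk ⟨i, ⟨l, hl⟩⟩ ℓ c (r - 3) ⟨0, by omega⟩ (by simp only [Fin.val_mk]; omega))

lemma litWalk_length (hr : 3 ≤ r) {i : Fin φ.m} {l : Fin φ.n × Bool} (hl : l ∈ φ.clauses i)
    (ℓ : Fin (2 * r)) (c : Fin 2) : (litWalk hr hl ℓ c).length = r - 1 := by
  rw [litWalk, Walk.length_cons, upWalk_length]; omega

lemma litWalk_support (hr : 3 ≤ r) {i : Fin φ.m} {l : Fin φ.n × Bool} (hl : l ∈ φ.clauses i)
    (ℓ : Fin (2 * r)) (c : Fin 2) :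
    ∀ x ∈ (litWalk hr hl ℓ c).support,
      x = VtxWR.v l.1 l.2 ∨ x = VtxWR.u i ℓ ∨
        ∃ t : Fin (r - 2), x = VtxWR.s ⟨i, ⟨l, hl⟩⟩ ℓ c t := by
  intro x hx
  simp only [litWalk, Walk.support_cons, List.mem_cons] at hx
  rcases hx with rfl | hx
  · exact Or.inl rfl
  · rcases upWalk_support _ _ _ _ _ _ x hx with h | ⟨t', -, rfl⟩
    · exact Or.inr (Or.inl h)
    · exact Or.inr (Or.inr ⟨t', rfl⟩)

lemma litWalk_isPath (hr : 3 ≤ r) {i : Fin φ.m} {l : Fin φ.n × Bool} (hl : l ∈ φ.clauses i)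
    (ℓ : Fin (2 * r)) (c : Fin 2) : (litWalk hr hl ℓ c).IsPath := by
  apply Walk.IsPath.cons (upWalk_isPath _ _ _ _ _ _)
  intro hmem
  rcases upWalk_support _ _ _ _ _ _ _ hmem with h | ⟨t', -, h⟩ <;> cases h

lemma list_exists_max {α : Type*} (σ : LinearOrder α) (l : List α) (hl : l ≠ []) :
    ∃ m ∈ l, ∀ x ∈ l, σ.le x m := by
  letI := σ
  induction l with
  | nil => exact absurd rfl hl
  | cons a l ih =>
    rcases eq_or_ne l [] with rfl | hne
    · exact ⟨a, List.mem_cons_self, by simp⟩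
    · obtain ⟨m, hm, hmax⟩ := ih hne
      rcases le_total a m with hh | hh
      · refine ⟨m, List.mem_cons_of_mem _ hm, ?_⟩
        intro x hx
        rcases List.mem_cons.1 hx with rfl | hx
        · exact hh
        · exact hmax x hx
      · refine ⟨a, List.mem_cons_self, ?_⟩
        intro x hx
        rcases List.mem_cons.1 hx with rfl | hx
        · exact le_refl x
        · exact le_trans (hmax x hx) hh

lemma list_exists_min {α : Type*} (σ : LinearOrder α) (l : List α) (hl : l ≠ []) :
    ∃ m ∈ l, ∀ x ∈ l, σ.le m x := by
  letI := σ
  induction l with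
  | nil => exact absurd rfl hl
  | cons a l ih =>
    rcases eq_or_ne l [] with rfl | hne
    · exact ⟨a, List.mem_cons_self, by simp⟩
    · obtain ⟨m, hm, hmin⟩ := ih hne
      rcases le_total m a with hh | hh
      · refine ⟨m, List.mem_cons_of_mem _ hm, ?_⟩
        intro x hx
        rcases List.mem_cons.1 hx with rfl | hx
        · exact hh
        · exact hmin x hx
      · refine ⟨a, List.mem_cons_self, ?_⟩
        intro x hx
        rcases List.mem_cons.1 hx with rfl | hx
        · exact le_refl x
        · exact le_trans hh (hmin x hx)

lemma exists_target {α : Type*} (G : SimpleGraph α) (σ : LinearOrder α) (n : ℕ) {z y : α}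
    (p : G.Walk z y) (hp : p.IsPath) (hlen : p.length ≤ n) (hzy : σ.lt z y) :
    ∃ m, m ∈ wreachSet G σ n z ∧ m ∈ p.support ∧ ∀ x ∈ p.support, σ.le x m := by
  letI := σ
  obtain ⟨m, hm, hmax⟩ := list_exists_max σ p.support p.support_ne_nil
  have hzm : σ.lt z m := lt_of_lt_of_le hzy (hmax y p.end_mem_support)
  refine ⟨m, ⟨hzm, p.takeUntil m hm, hp.takeUntil hm,
    le_trans (p.length_takeUntil_le hm) hlen, ?_⟩, hm, hmax⟩
  intro w hw hwz hwm
  exact lt_of_le_of_ne (hmax w (p.support_takeUntil_subset hm hw)) hwm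

lemma card_le_ncard {α ι : Type*} [Fintype ι] {S : Set α} (hS : S.Finite) (f : ι → α)
    (hf : Function.Injective f) (hfS : ∀ x, f x ∈ S) : Fintype.card ι ≤ S.ncard := by
  classical
  have h1 : (Set.range f).ncard = Fintype.card ι := by
    rw [← Nat.card_coe_set_eq, Nat.card_range_of_injective hf, Nat.card_eq_fintype_card]
  rw [← h1]
  exact Set.ncard_le_ncard (Set.range_subset_iff.2 hfS) hS

lemma caseA (hr : 3 ≤ r) (σ : LinearOrder (VtxWR r φ)) {i : Fin φ.m} {l : Fin φ.n × Bool}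
    (hl : l ∈ φ.clauses i)
    (hmin : ∀ ℓ : Fin (2 * r), σ.lt (VtxWR.v l.1 l.2) (VtxWR.u i ℓ)) :
    2 * r ≤ (wreachSet (GWR r φ) σ r (VtxWR.v l.1 l.2)).ncard := by
  classical
  letI := σ
  have H : ∀ ℓ : Fin (2 * r), ∃ mv, mv ∈ wreachSet (GWR r φ) σ r (VtxWR.v l.1 l.2) ∧
      (mv = VtxWR.u i ℓ ∨ ∃ t, mv = VtxWR.s ⟨i, ⟨l, hl⟩⟩ ℓ 0 t) := by
    intro ℓ
    obtain ⟨m, hmW, hmsup, hmax⟩ := exists_target (GWR r φ) σ r (litWalk hr hl ℓ 0)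
      (litWalk_isPath hr hl ℓ 0) (by rw [litWalk_length]; omega) (hmin ℓ)
    refine ⟨m, hmW, ?_⟩
    rcases litWalk_support hr hl ℓ 0 m hmsup with h | h | ⟨t, h⟩
    · exfalso
      have h1 : σ.lt (VtxWR.v l.1 l.2) m := hmW.1
      rw [h] at h1
      exact lt_irrefl _ h1
    · exact Or.inl h
    · exact Or.inr ⟨t, h⟩
  choose f hf1 hf2 using H
  have hinj : Function.Injective f := by
    intro a b hab
    rcases hf2 a with h1 | ⟨t1, h1⟩ <;> rcases hf2 b with h2 | ⟨t2, h2⟩ <;>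
      rw [hab, h2] at h1
    · injection h1 with h1a h1b
      exact h1b.symm
    · cases h1
    · cases h1
    · injection h1 with h1a h1b h1c h1d
      exact h1b.symm
  have := card_le_ncard (Set.toFinite _) f hinj hf1
  simpa using this

lemma caseB (hr : 3 ≤ r) (σ : LinearOrder (VtxWR r φ)) (i : Fin φ.m) (ℓ0 : Fin (2 * r))
    (hmin : ∀ l ∈ φ.clauses i, σ.lt (VtxWR.u i ℓ0) (VtxWR.v l.1 l.2))
    (hfals : ∀ l ∈ φ.clauses i, σ.lt (VtxWR.v l.1 l.2) (VtxWR.v l.1 (!l.2))) :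
    2 * r ≤ (wreachSet (GWR r φ) σ r (VtxWR.u i ℓ0)).ncard := by
  classical
  letI := σ
  set z := VtxWR.u i ℓ0 with hz
  set W := wreachSet (GWR r φ) σ r z with hW
  -- membership in the gadget of literal l
  have hP : ∀ l : {x // x ∈ φ.clauses i}, ∃ x y : VtxWR r φ, x ≠ y ∧ x ∈ W ∧ y ∈ W ∧
      ((∃ b, x = VtxWR.v l.1.1 b) ∨ ∃ c t, x = VtxWR.s ⟨i, l⟩ ℓ0 c t) ∧
      ((∃ b, y = VtxWR.v l.1.1 b) ∨ ∃ c t, y = VtxWR.s ⟨i, l⟩ ℓ0 c t) := by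
    rintro ⟨l, hl⟩
    have hwalk : ∀ c : Fin 2, ∃ m, m ∈ W ∧ m ∈ (litWalk hr hl ℓ0 c).support ∧
        ∀ x ∈ (litWalk hr hl ℓ0 c).support, σ.le x m := by
      intro c
      obtain ⟨m, h1, h2, h3⟩ := exists_target (GWR r φ) σ r (litWalk hr hl ℓ0 c).reverse
        ((litWalk_isPath hr hl ℓ0 c).reverse)
        (by rw [Walk.length_reverse, litWalk_length]; omega) (hmin l hl)
      refine ⟨m, h1, ?_, ?_⟩
      · simpa [Walk.support_reverse] using h2
      · intro x hx
        exact h3 x (by simpa [Walk.support_reverse] using hx)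
    obtain ⟨m0, hm0W, hm0sup, hm0max⟩ := hwalk 0
    obtain ⟨m1, hm1W, hm1sup, hm1max⟩ := hwalk 1
    have hclass : ∀ (c : Fin 2) (m : VtxWR r φ), m ∈ W → m ∈ (litWalk hr hl ℓ0 c).support →
        m = VtxWR.v l.1 l.2 ∨ ∃ t, m = VtxWR.s ⟨i, ⟨l, hl⟩⟩ ℓ0 c t := by
      intro c m hmW hmsup
      rcases litWalk_support hr hl ℓ0 c m hmsup with h | h | ⟨t, h⟩
      · exact Or.inl h
      · exfalso
        have h1 : σ.lt z m := hmW.1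
        rw [h] at h1
        exact lt_irrefl _ h1
      · exact Or.inr ⟨t, h⟩
    rcases eq_or_ne m0 m1 with heq | hne
    · -- both maxima equal: must be the literal vertex; use the partner
      have hm0v : m0 = VtxWR.v l.1 l.2 := by
        rcases hclass 0 m0 hm0W hm0sup with h | ⟨t0, h0⟩
        · exact h
        · rcases hclass 1 m1 hm1W hm1sup with h | ⟨t1, h1⟩
          · rw [heq, h] at h0; cases h0
          · rw [heq, h1] at h0
            simp only [VtxWR.s.injEq] at h0
            exact absurd h0.2.2.1 (by decide)
      -- the extended walk to the partner
      set w := VtxWR.v l.1 l.2 with hw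
      set w' := VtxWR.v l.1 (!l.2) with hw'
      have hadj : (GWR r φ).Adj w w' := adj_vv l.1 l.2
      set q : (GWR r φ).Walk z w := (litWalk hr hl ℓ0 0).reverse with hqdef
      have hw'q : w' ∉ q.support := by
        intro hmem
        have hmem' : w' ∈ (litWalk hr hl ℓ0 0).support := by
          simpa [hqdef, Walk.support_reverse] using hmem
        rcases litWalk_support hr hl ℓ0 0 w' hmem' with h | h | ⟨t, h⟩ <;>
          simp [hw', VtxWR.v.injEq] at h
      set q' : (GWR r φ).Walk z w' := (Walk.cons hadj.symm q.reverse).reverse with hq'def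
      have hq'path : q'.IsPath := by
        apply Walk.IsPath.reverse
        rw [Walk.cons_isPath_iff]
        refine ⟨((litWalk_isPath hr hl ℓ0 0).reverse).reverse, ?_⟩
        intro hmem
        exact hw'q (by simpa [Walk.support_reverse] using hmem)
      have hq'len : q'.length = r := by
        rw [hq'def, Walk.length_reverse, Walk.length_cons, Walk.length_reverse, hqdef,
          Walk.length_reverse, litWalk_length]
        omega
      have hq'sup : ∀ x, x ∈ q'.support → x = w' ∨ x ∈ (litWalk hr hl ℓ0 0).support := by
        intro x hx
        have h' : x ∈ (litWalk hr hl ℓ0 0).support ∨ x = w ∨ x = w' := by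
          simpa [hq'def, Walk.support_reverse, hqdef] using hx
        rcases h' with h | h | h
        · exact Or.inr h
        · exact Or.inr (h ▸ (litWalk hr hl ℓ0 0).start_mem_support)
        · exact Or.inl h
      have hzw : σ.lt z w := by rw [← hm0v]; exact hm0W.1
      have hww' : σ.lt w w' := hfals l hl
      have hw'W : w' ∈ W := by
        refine ⟨lt_trans hzw hww', q', hq'path, le_of_eq hq'len, ?_⟩
        intro x hx hxz hxw'
        rcases hq'sup x hx with rfl | hx'
        · exact absurd rfl hxw'
        · have : σ.le x m0 := hm0max x hx'
          rw [hm0v] at this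
          exact lt_of_le_of_lt this hww'
      refine ⟨w, w', ?_, ?_, hw'W, Or.inl ⟨l.2, rfl⟩, Or.inl ⟨!l.2, rfl⟩⟩
      · intro heq
        rw [hw, hw'] at heq
        injection heq with h1 h2
        exact absurd h2 (by simp)
      · rw [← hm0v]; exact hm0W
    · refine ⟨m0, m1, hne, hm0W, hm1W, ?_, ?_⟩
      · rcases hclass 0 m0 hm0W hm0sup with h | ⟨t, h⟩
        · exact Or.inl ⟨l.2, h⟩
        · exact Or.inr ⟨0, t, h⟩
      · rcases hclass 1 m1 hm1W hm1sup with h | ⟨t, h⟩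
        · exact Or.inl ⟨l.2, h⟩
        · exact Or.inr ⟨1, t, h⟩
  choose g1 g2 hgne hg1W hg2W hg1G hg2G using hP
  have hGl : ∀ (l l' : {x // x ∈ φ.clauses i}) (x : VtxWR r φ),
      ((∃ b, x = VtxWR.v l.1.1 b) ∨ ∃ c t, x = VtxWR.s ⟨i, l⟩ ℓ0 c t) →
      ((∃ b, x = VtxWR.v l'.1.1 b) ∨ ∃ c t, x = VtxWR.s ⟨i, l'⟩ ℓ0 c t) → l = l' := by
    rintro ⟨l, hl⟩ ⟨l', hl'⟩ x (⟨b, rfl⟩ | ⟨c, t, rfl⟩) (⟨b', h⟩ | ⟨c', t', h⟩)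
    · injection h with h1 h2
      exact Subtype.ext (φ.vars_distinct i l hl l' hl' h1)
    · cases h
    · cases h
    · injection h with hocc h2 h3 h4
      exact Subtype.ext (congrArg
        (fun x : Σ i : Fin φ.m, {l // l ∈ φ.clauses i} => (x.2 : Fin φ.n × Bool)) hocc)
  set f : {x // x ∈ φ.clauses i} × Fin 2 → VtxWR r φ :=
    fun p => if p.2 = 0 then g1 p.1 else g2 p.1 with hf
  have hc2 : ∀ d : Fin 2, d = 0 ∨ d = 1 := by decide
  have h10 : (1 : Fin 2) ≠ 0 := by decide
  have hf0 : ∀ l, f (l, 0) = g1 l := by intro l; simp only [hf]; exact if_pos trivial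
  have hf1 : ∀ l, f (l, 1) = g2 l := by intro l; simp only [hf]; exact if_neg h10
  have hfW : ∀ p, f p ∈ W := by
    rintro ⟨l, c⟩
    rcases hc2 c with rfl | rfl
    · rw [hf0]; exact hg1W l
    · rw [hf1]; exact hg2W l
  have hfinj : Function.Injective f := by
    rintro ⟨l, c⟩ ⟨l', c'⟩ hll
    have hGf : ∀ (l : {x // x ∈ φ.clauses i}) (c : Fin 2),
        (∃ b, f (l, c) = VtxWR.v l.1.1 b) ∨ ∃ cc t, f (l, c) = VtxWR.s ⟨i, l⟩ ℓ0 cc t := by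
      intro l c
      rcases hc2 c with rfl | rfl
      · rw [hf0]; exact hg1G l
      · rw [hf1]; exact hg2G l
    have hll' : l = l' := hGl l l' (f (l, c)) (hGf l c) (hll ▸ hGf l' c')
    subst hll'
    have hcc : c = c' := by
      rcases hc2 c with rfl | rfl <;> rcases hc2 c' with rfl | rfl
      · rfl
      · exfalso
        have h' : g1 l = g2 l := by rw [← hf0 l, ← hf1 l, hll]
        exact (hgne l) h'
      · exfalso
        have h' : g1 l = g2 l := by rw [← hf0 l, ← hf1 l, hll]
        exact (hgne l) h'
      · rfl
    rw [hcc]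
  have hcard := card_le_ncard (Set.toFinite _) f hfinj hfW
  have hcard2 : Fintype.card ({x // x ∈ φ.clauses i} × Fin 2) = 2 * r := by
    rw [Fintype.card_prod, Fintype.card_coe, φ.clause_card i, Fintype.card_fin]
    omega
  omega

end WCRAux

/-- If the reduction graph `G(φ)` of an Exact r-SAT instance `φ` (with `r ≥ 3`) has weak
`r`-coloring number at most `2r - 1`, then `φ` has a satisfying assignment. -/
theorem wcolr_le_implies_sat (r : ℕ) (hr : 3 ≤ r) (φ : ExactSAT r)
    (h : wcolNum (GWR r φ) r ≤ 2 * r - 1) :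
    φ.Satisfiable := by
  classical
  have hne : Nonempty (LinearOrder (VtxWR r φ)) := by
    let e := Fintype.equivFin (VtxWR r φ)
    exact ⟨LinearOrder.lift' e e.injective⟩
  obtain ⟨σ, hσeq⟩ : ∃ σ : LinearOrder (VtxWR r φ),
      wcolOrd (GWR r φ) σ r = wcolNum (GWR r φ) r := by
    have h1 := Nat.sInf_mem (Set.range_nonempty
      (fun σ : LinearOrder (VtxWR r φ) => wcolOrd (GWR r φ) σ r))
    exact h1
  have hσ : wcolOrd (GWR r φ) σ r ≤ 2 * r - 1 := hσeq ▸ h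
  have hbound : ∀ z : VtxWR r φ, (wreachSet (GWR r φ) σ r z).ncard ≤ 2 * r - 1 :=
    fun z => le_trans (Finset.le_sup (f := fun u => (wreachSet (GWR r φ) σ r u).ncard)
      (Finset.mem_univ z)) hσ
  refine ⟨fun j => decide (σ.lt (VtxWR.v j false) (VtxWR.v j true)), ?_⟩
  intro i
  by_contra hcon
  push_neg at hcon
  have hfals : ∀ l ∈ φ.clauses i, σ.lt (VtxWR.v l.1 l.2) (VtxWR.v l.1 (!l.2)) := by
    letI := σ
    intro l hl
    have hc := hcon l hl
    rcases Bool.eq_false_or_eq_true l.2 with hb | hb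
    · rw [hb] at hc ⊢
      have h1 : VtxWR.v l.1 true ≤ VtxWR.v l.1 false := by simpa using hc
      have h2 : VtxWR.v l.1 true ≠ VtxWR.v l.1 false := by simp
      have h3 : VtxWR.v l.1 true < VtxWR.v l.1 false := lt_of_le_of_ne h1 h2
      simpa using h3
    · rw [hb] at hc ⊢
      have hP : VtxWR.v l.1 false < VtxWR.v l.1 true := by simpa using hc
      simpa using hP
  let L : List (VtxWR r φ) := (List.ofFn fun ℓ : Fin (2 * r) => VtxWR.u i ℓ) ++
      ((φ.clauses i).toList.map fun l => VtxWR.v l.1 l.2)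
  have hu_mem : ∀ ℓ : Fin (2 * r), VtxWR.u i ℓ ∈ L := by
    intro ℓ
    refine List.mem_append_left _ ?_
    rw [List.mem_ofFn]
    exact ⟨ℓ, rfl⟩
  have hv_mem : ∀ l ∈ φ.clauses i, VtxWR.v l.1 l.2 ∈ L := fun l hl =>
    List.mem_append_right _ (List.mem_map.2 ⟨l, (Finset.mem_toList).2 hl, rfl⟩)
  have hLne : L ≠ [] := List.ne_nil_of_mem (hu_mem ⟨0, by omega⟩)
  obtain ⟨z, hzL, hzmin⟩ := WCRAux.list_exists_min σ L hLne
  have hzcases : (∃ ℓ, z = VtxWR.u i ℓ) ∨ ∃ l, l ∈ φ.clauses i ∧ z = VtxWR.v l.1 l.2 := by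
    rcases List.mem_append.1 hzL with hz1 | hz2
    · rw [List.mem_ofFn] at hz1
      obtain ⟨ℓ, hℓ⟩ := hz1
      exact Or.inl ⟨ℓ, hℓ.symm⟩
    · obtain ⟨l, hl, hv⟩ := List.mem_map.1 hz2
      exact Or.inr ⟨l, (Finset.mem_toList).1 hl, hv.symm⟩
  letI := σ
  rcases hzcases with ⟨ℓ0, rfl⟩ | ⟨l0, hl0, rfl⟩
  · have hminv : ∀ l ∈ φ.clauses i, σ.lt (VtxWR.u i ℓ0) (VtxWR.v l.1 l.2) := by
      intro l hl
      refine lt_of_le_of_ne (hzmin _ (hv_mem l hl)) ?_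
      intro hh
      exact absurd hh (by simp)
    have hge := WCRAux.caseB hr σ i ℓ0 hminv hfals
    have hle := hbound (VtxWR.u i ℓ0)
    omega
  · have hminu : ∀ ℓ : Fin (2 * r), σ.lt (VtxWR.v l0.1 l0.2) (VtxWR.u i ℓ) := by
      intro ℓ
      refine lt_of_le_of_ne (hzmin _ (hu_mem ℓ)) ?_
      intro hh
      exact absurd hh (by simp)
    have hge := WCRAux.caseA hr σ hl0 hminu
    have hle := hbound (VtxWR.v l0.1 l0.2)
    omega
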